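/- Let X₁, X₂, … be independent, identically distributed real random variables with mean μ > 0 and standard deviation at most cμ, where c > 0 is a known constant, and fix ε > 0 and δ ∈ (0,1). Set m = ⌈8(c/ε)²⌉ and k = max(⌈ln(1/δ)/ln(16/7)⌉, 5). For j = 1,…,2k+1 let Wⱼ be the average of the j-th disjoint block of m samples of the sequence. Then the estimate μ̂ = median{W₁, …, W_{2k+1}} satisfies P(|μ̂ − μ| > εμ) ≤ δ, and μ̂ uses m(2k+1) = ⌈8(c/ε)²⌉(2·max(⌈ln(1/δ)/ln(16/7)⌉,5)+1) samples. -/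

import Mathlib

open MeasureTheory ProbabilityTheory Real

/-- The uniform probability measure on the interval `[a, b]`. -/
noncomputable def uniformIcc (a b : ℝ) : Measure ℝ :=
  (ENNReal.ofReal (b - a))⁻¹ • (MeasureTheory.volume.restrict (Set.Icc a b))

/-- The median of `2*n+1` real values: their `(n+1)`-st smallest value. -/
noncomputable def medianOf {n : ℕ} (v : Fin (2 * n + 1) → ℝ) : ℝ :=
  (Multiset.sort (↑(List.ofFn v)) (· ≤ ·)).get ⟨n, by simp; omega⟩

/-- The nuisance factor `f(ε) = (1+ε)/((1-ε)² (1+ε-ε²))`. -/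
noncomputable def nuisance (ε : ℝ) : ℝ := (1 + ε) / ((1 - ε) ^ 2 * (1 + ε - ε ^ 2))

/-! ### Auxiliary lemmas -/

lemma aux_countP_ge_of_sorted_high {L : List ℝ} (hs : L.Pairwise (· ≤ ·)) {n : ℕ}
    (hn : n < L.length) (p : ℝ → Bool) (hp : ∀ x, L.get ⟨n, hn⟩ ≤ x → p x) :
    L.length - n ≤ L.countP p := by
  have h1 : L.countP p = (L.take n).countP p + (L.drop n).countP p := by
    rw [← List.countP_append, List.take_append_drop]
  have h2 : (L.drop n).countP p = (L.drop n).length := by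
    apply List.countP_eq_length.2
    intro x hx
    rcases List.mem_iff_getElem.1 hx with ⟨i, hi, rfl⟩
    rw [List.getElem_drop]
    apply hp
    have := List.Pairwise.rel_get_of_le hs (a := ⟨n, hn⟩)
      (b := ⟨n + i, by have := hi; simp at this ⊢; omega⟩) (by simp [Fin.le_def])
    simpa using this
  rw [h1, h2, List.length_drop]
  omega

lemma aux_countP_ge_of_sorted_low {L : List ℝ} (hs : L.Pairwise (· ≤ ·)) {n : ℕ}
    (hn : n < L.length) (p : ℝ → Bool) (hp : ∀ x, x ≤ L.get ⟨n, hn⟩ → p x) :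
    n + 1 ≤ L.countP p := by
  have h1 : L.countP p = (L.take (n+1)).countP p + (L.drop (n+1)).countP p := by
    rw [← List.countP_append, List.take_append_drop]
  have h2 : (L.take (n+1)).countP p = (L.take (n+1)).length := by
    apply List.countP_eq_length.2
    intro x hx
    rcases List.mem_iff_getElem.1 hx with ⟨i, hi, rfl⟩
    have hi' : i < n + 1 := by simp at hi; omega
    rw [List.getElem_take]
    apply hp
    have := List.Pairwise.rel_get_of_le hs (a := ⟨i, by omega⟩)
      (b := ⟨n, hn⟩) (by simp [Fin.le_def]; omega)
    simpa using this
  rw [h1, h2, List.length_take]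
  omega

/-- If the median deviates from `a` by more than `t`, then at least `n+1` of the values do. -/
lemma aux_median_count {n : ℕ} (v : Fin (2 * n + 1) → ℝ) (a t : ℝ)
    (h : t < |medianOf v - a|) :
    n + 1 ≤ (Finset.univ.filter (fun j => t < |v j - a|)).card := by
  classical
  set L := Multiset.sort (↑(List.ofFn v) : Multiset ℝ) (· ≤ ·) with hLdef
  have hlen : L.length = 2 * n + 1 := by simp [hLdef]
  have hn : n < L.length := by omega
  have hsorted : L.Pairwise (· ≤ ·) := Multiset.pairwise_sort _ _
  have hM : medianOf v = L.get ⟨n, hn⟩ := rfl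
  have hcard : (Finset.univ.filter (fun j => t < |v j - a|)).card
      = L.countP (fun x => decide (t < |x - a|)) := by
    have h1 : ((↑(List.ofFn v) : Multiset ℝ)) = Multiset.map v Finset.univ.val := by
      rw [List.ofFn_eq_map, Fin.univ_def]; rfl
    have h2 : Multiset.countP (fun x => t < |x - a|) (↑(List.ofFn v) : Multiset ℝ)
        = L.countP (fun x => decide (t < |x - a|)) := by
      conv_lhs => rw [← Multiset.sort_eq (↑(List.ofFn v) : Multiset ℝ) (· ≤ ·)]
      rw [Multiset.coe_countP]
    rw [← h2, h1, Multiset.countP_map]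
    rfl
  rw [hcard]
  rcases lt_abs.1 h with h' | h'
  · have := aux_countP_ge_of_sorted_high hsorted hn (fun x => decide (t < |x - a|)) ?_
    · omega
    · intro x hx
      simp only [decide_eq_true_eq]
      have : t < x - a := by have := hM ▸ h'; linarith
      exact lt_of_lt_of_le this (le_abs_self _)
  · apply aux_countP_ge_of_sorted_low hsorted hn
    intro x hx
    simp only [decide_eq_true_eq]
    have h'' : t < a - x := by have := hM ▸ h'; linarith
    calc t < a - x := h''
    _ = -(x - a) := by ring
    _ ≤ |x - a| := neg_le_abs _

/-- Functions measurable with respect to disjoint blocks of an independent family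
are independent. -/
lemma aux_block_indepFun {Ω : Type*} [MeasureSpace Ω]
    (X : ℕ → Ω → ℝ) (hXm : ∀ i, Measurable (X i))
    (hindep : iIndepFun X ℙ) (m : ℕ) {N : ℕ}
    (g : Fin N → Ω → ℝ)
    (hg : ∀ j : Fin N, Measurable[⨆ i ∈ Set.Ico (j.val * m) (j.val * m + m),
      MeasurableSpace.comap (X i) inferInstance] (g j))
    (j : Fin N) (s : Finset (Fin N)) (hj : j ∉ s) :
    IndepFun (g j) (∏ i ∈ s, g i) ℙ := by
  set M : ℕ → MeasurableSpace Ω := fun i => MeasurableSpace.comap (X i) inferInstance with hM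
  set B : Fin N → Set ℕ := fun j => Set.Ico (j.val * m) (j.val * m + m) with hB
  have hdisj : ∀ a b : Fin N, a ≠ b → Disjoint (B a) (B b) := by
    intro a b hab
    apply Set.disjoint_left.2
    intro x hxa hxb
    simp only [hB, Set.mem_Ico] at hxa hxb
    rcases Nat.lt_or_ge a.val b.val with h | h
    · have : a.val + 1 ≤ b.val := h
      nlinarith [hxa.2, hxb.1]
    · rcases Nat.lt_or_ge b.val a.val with h' | h'
      · have : b.val + 1 ≤ a.val := h'
        nlinarith [hxb.2, hxa.1]
      · exact hab (Fin.ext (le_antisymm h' h))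
  have hTdisj : Disjoint (B j) (⋃ i ∈ s, B i) := by
    apply Set.disjoint_iUnion_right.2
    intro i
    apply Set.disjoint_iUnion_right.2
    intro hi
    exact hdisj j i (fun h => hj (h ▸ hi))
  have h_le : ∀ i, M i ≤ (inferInstance : MeasurableSpace Ω) := fun i => (hXm i).comap_le
  have hIndep := indep_iSup_of_disjoint h_le hindep.iIndep hTdisj
  rw [IndepFun_iff_Indep]
  apply indep_of_indep_of_le_left (indep_of_indep_of_le_right hIndep ?_) ?_
  · apply measurable_iff_comap_le.1
    rw [show (∏ i ∈ s, g i) = fun ω => ∏ i ∈ s, g i ω from by ext ω; simp]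
    apply Finset.measurable_prod
    intro i hi
    apply (hg i).mono ?_ le_rfl
    apply iSup₂_le
    intro x hx
    have : x ∈ ⋃ i ∈ s, B i := Set.mem_biUnion hi hx
    exact le_iSup₂ (f := fun (i : ℕ) (_ : i ∈ ⋃ i ∈ s, B i) => M i) x this
  · exact measurable_iff_comap_le.1 (hg j)

/-- Chebyshev bound for a block average. -/
lemma aux_block_cheb {Ω : Type*} [MeasureSpace Ω] [IsProbabilityMeasure (ℙ : Measure Ω)]
    (c μ ε : ℝ) (hc : 0 < c) (hμ : 0 < μ) (hε : 0 < ε)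
    (m : ℕ) (hm : m = ⌈8 * (c / ε) ^ 2⌉₊)
    (X : ℕ → Ω → ℝ)
    (hindep : iIndepFun X ℙ)
    (hX2 : ∀ i, MemLp (X i) 2 ℙ)
    (hmean : ∀ i, ∫ ω, X i ω ∂ℙ = μ)
    (hsd : ∀ i, Real.sqrt (variance (X i) ℙ) ≤ c * μ) (j : ℕ) :
    ℙ {ω | ε * μ < |(∑ l ∈ Finset.range m, X (j * m + l) ω) / m - μ|}
      ≤ ENNReal.ofReal (1/8) := by
  have hm0 : 0 < m := by
    rw [hm]; exact Nat.ceil_pos.2 (by positivity)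
  have hmr : (8 * (c / ε) ^ 2 : ℝ) ≤ m := by rw [hm]; exact Nat.le_ceil _
  set S : Ω → ℝ := fun ω => ∑ l ∈ Finset.range m, X (j * m + l) ω with hS
  have hSsum : S = ∑ l ∈ Finset.range m, X (j * m + l) := by
    ext ω; simp [hS]
  have hS2 : MemLp S 2 ℙ := by
    rw [hSsum]; exact memLp_finset_sum' _ (fun i _ => hX2 _)
  have hW2 : MemLp (fun ω => S ω / m) 2 ℙ := by
    simpa [div_eq_inv_mul] using hS2.const_mul ((m : ℝ)⁻¹)
  have hvarX : ∀ i, variance (X i) ℙ ≤ (c * μ)^2 := by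
    intro i
    have h1 := hsd i
    have h2 : variance (X i) ℙ = (Real.sqrt (variance (X i) ℙ))^2 :=
      (Real.sq_sqrt (variance_nonneg _ _)).symm
    rw [h2]
    exact pow_le_pow_left₀ (Real.sqrt_nonneg _) h1 2
  have hvarS : variance S ℙ ≤ m * (c * μ)^2 := by
    rw [hSsum, IndepFun.variance_sum (fun i _ => hX2 _)
      (fun a ha b hb hab => hindep.indepFun (by omega))]
    calc ∑ l ∈ Finset.range m, variance (X (j*m+l)) ℙ
        ≤ ∑ l ∈ Finset.range m, (c*μ)^2 := Finset.sum_le_sum (fun i _ => hvarX _)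
      _ = m * (c*μ)^2 := by simp [mul_comm]
  have hvarW : variance (fun ω => S ω / m) ℙ ≤ ε^2 * μ^2 / 8 := by
    have : (fun ω => S ω / m) = fun ω => (m:ℝ)⁻¹ * S ω := by
      ext ω; rw [div_eq_inv_mul]
    rw [this, variance_const_mul]
    have hmpos : (0:ℝ) < m := Nat.cast_pos.2 hm0
    calc ((m:ℝ)⁻¹)^2 * variance S ℙ ≤ ((m:ℝ)⁻¹)^2 * (m * (c*μ)^2) := by
          apply mul_le_mul_of_nonneg_left hvarS (by positivity)
      _ = (c*μ)^2 / m := by field_simp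
      _ ≤ ε^2 * μ^2 / 8 := by
          rw [div_le_div_iff₀ hmpos (by norm_num)]
          calc (c*μ)^2 * 8 = 8 * (c/ε)^2 * (ε^2 * μ^2) := by field_simp
            _ ≤ m * (ε^2*μ^2) := by
                apply mul_le_mul_of_nonneg_right hmr (by positivity)
            _ = ε^2*μ^2*m := by ring
  have hmeanW : ∫ ω, S ω / m ∂ℙ = μ := by
    rw [integral_div, hSsum]
    simp only [Finset.sum_apply]
    rw [integral_finset_sum _ (fun i _ => (hX2 _).integrable one_le_two)]
    simp only [hmean]
    rw [Finset.sum_const, Finset.card_range]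
    field_simp
    rw [nsmul_eq_mul]
  have hεμ : 0 < ε * μ := by positivity
  calc ℙ {ω | ε * μ < |S ω / m - μ|}
      ≤ ℙ {ω | ε * μ ≤ |(fun ω => S ω / m) ω - ∫ ω, S ω / m ∂ℙ|} := by
        apply measure_mono
        intro ω hω
        simp only [Set.mem_setOf_eq, hmeanW] at hω ⊢
        exact le_of_lt hω
    _ ≤ ENNReal.ofReal (variance (fun ω => S ω / m) ℙ / (ε*μ)^2) :=
        meas_ge_le_variance_div_sq hW2 hεμ
    _ ≤ ENNReal.ofReal (1/8) := by
        apply ENNReal.ofReal_le_ofReal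
        rw [div_le_iff₀ (by positivity)]
        calc variance (fun ω => S ω / m) ℙ ≤ ε^2*μ^2/8 := hvarW
          _ = 1/8 * (ε*μ)^2 := by ring

/-- median-of-means: With `m = ⌈8(c/ε)²⌉`, `k = max(⌈ln(1/δ)/ln(16/7)⌉,5)`,
and `Wⱼ` the average of the `j`-th disjoint block of `m` samples of an i.i.d. sequence with
mean `μ > 0` and standard deviation at most `cμ`, the estimate
`μ̂ = median{W₁,…,W₂ₖ₊₁}` satisfies `P(|μ̂ − μ| > εμ) ≤ δ`, and it uses
`m(2k+1)` samples. -/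
theorem median_of_means {Ω : Type*} [MeasureSpace Ω]
    [IsProbabilityMeasure (ℙ : Measure Ω)]
    (c μ ε δ : ℝ) (hc : 0 < c) (hμ : 0 < μ) (hε : 0 < ε) (hδ : δ ∈ Set.Ioo (0 : ℝ) 1)
    (m k : ℕ) (hm : m = ⌈8 * (c / ε) ^ 2⌉₊)
    (hk : k = max ⌈Real.log (1 / δ) / Real.log (16 / 7)⌉₊ 5)
    (X : ℕ → Ω → ℝ) (hXm : ∀ i, Measurable (X i))
    (hindep : iIndepFun X ℙ)
    (hdist : ∀ i, Measure.map (X i) ℙ = Measure.map (X 0) ℙ)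
    (hX2 : ∀ i, MemLp (X i) 2 ℙ)
    (hmean : ∀ i, ∫ ω, X i ω ∂ℙ = μ)
    (hsd : ∀ i, Real.sqrt (variance (X i) ℙ) ≤ c * μ) :
    ℙ {ω | ε * μ <
        |medianOf (fun j : Fin (2 * k + 1) =>
          (∑ l ∈ Finset.range m, X (j.val * m + l) ω) / m) - μ|} ≤ ENNReal.ofReal δ ∧
      m * (2 * k + 1) =
        ⌈8 * (c / ε) ^ 2⌉₊ * (2 * max ⌈Real.log (1 / δ) / Real.log (16 / 7)⌉₊ 5 + 1) := by
  classical
  refine ⟨?_, by rw [hm, hk]⟩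
  set N := 2 * k + 1 with hN
  set W : Fin N → Ω → ℝ :=
    fun j ω => (∑ l ∈ Finset.range m, X (j.val * m + l) ω) / m with hW
  -- measurability of block averages
  have hWm : ∀ j, Measurable (W j) := by
    intro j
    apply Measurable.div_const
    exact Finset.measurable_sum _ (fun l _ => hXm _)
  set A : Fin N → Set Ω := fun j => {ω | ε * μ < |W j ω - μ|} with hA
  have hAmeas : ∀ j, MeasurableSet (A j) :=
    fun j => measurableSet_lt measurable_const ((hWm j).sub measurable_const).abs
  have hAprob : ∀ j, ℙ (A j) ≤ ENNReal.ofReal (1/8) :=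
    fun j => aux_block_cheb c μ ε hc hμ hε m hm X hindep hX2 hmean hsd j.val
  set g : Fin N → Ω → ℝ := fun j ω => Set.indicator (A j) (fun _ => (6:ℝ)) ω + 1 with hg
  have hg1 : ∀ j ω, 1 ≤ g j ω := by
    intro j ω
    simp only [hg]
    have : (0:ℝ) ≤ Set.indicator (A j) (fun _ => (6:ℝ)) ω :=
      Set.indicator_nonneg (fun _ _ => by norm_num) ω
    linarith
  have hg7 : ∀ j ω, g j ω ≤ 7 := by
    intro j ω
    simp only [hg]
    have : Set.indicator (A j) (fun _ => (6:ℝ)) ω ≤ 6 :=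
      Set.indicator_le' (fun _ _ => le_refl _) (fun _ _ => by norm_num) ω
    linarith
  have hgmeas : ∀ j, Measurable (g j) :=
    fun j => (measurable_const.indicator (hAmeas j)).add measurable_const
  have hgint : ∀ j, Integrable (g j) ℙ :=
    fun j => ((integrable_const (6:ℝ)).indicator (hAmeas j)).add (integrable_const 1)
  have hgE : ∀ j, ∫ ω, g j ω ∂ℙ ≤ 7/4 := by
    intro j
    have h1 : ∫ ω, g j ω ∂ℙ = 6 * (ℙ (A j)).toReal + 1 := by
      simp only [hg]
      rw [integral_add ((integrable_const (6:ℝ)).indicator (hAmeas j)) (integrable_const 1),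
        integral_indicator_const (6:ℝ) (hAmeas j), integral_const]
      simp [mul_comm, measureReal_def]
    rw [h1]
    have h2 : (ℙ (A j)).toReal ≤ 1/8 := by
      have := hAprob j
      calc (ℙ (A j)).toReal ≤ (ENNReal.ofReal (1/8)).toReal :=
          ENNReal.toReal_mono (by simp) this
        _ = 1/8 := ENNReal.toReal_ofReal (by norm_num)
    linarith
  have hgEnn : ∀ j, 0 ≤ ∫ ω, g j ω ∂ℙ :=
    fun j => integral_nonneg (fun ω => le_trans zero_le_one (hg1 j ω))
  -- block measurability for independence
  have hgblock : ∀ j : Fin N, Measurable[⨆ i ∈ Set.Ico (j.val * m) (j.val * m + m),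
      MeasurableSpace.comap (X i) inferInstance] (g j) := by
    intro j
    set Mj : MeasurableSpace Ω := ⨆ i ∈ Set.Ico (j.val * m) (j.val * m + m),
      MeasurableSpace.comap (X i) inferInstance with hMj
    have hXblock : ∀ l, l < m → Measurable[Mj] (X (j.val * m + l)) := by
      intro l hl
      apply measurable_iff_comap_le.2
      exact le_iSup₂ (f := fun (i : ℕ) (_ : i ∈ Set.Ico (j.val * m) (j.val * m + m)) =>
        MeasurableSpace.comap (X i) inferInstance) (j.val * m + l) (by simp [Set.mem_Ico]; omega)
    have hWj : Measurable[Mj] (W j) := by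
      apply Measurable.div_const
      exact Finset.measurable_sum _ (fun l hl => hXblock l (Finset.mem_range.1 hl))
    have hAj : MeasurableSet[Mj] (A j) :=
      measurableSet_lt measurable_const ((hWj.sub measurable_const).abs)
    exact (measurable_const.indicator hAj).add measurable_const
  have hfact : ∀ (j : Fin N) (s : Finset (Fin N)), j ∉ s →
      IndepFun (g j) (∏ i ∈ s, g i) ℙ :=
    fun j s hj => aux_block_indepFun X hXm hindep m g hgblock j s hj
  -- product expectation factorizes
  have hprod : ∀ s : Finset (Fin N), Integrable (∏ i ∈ s, g i) ℙ ∧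
      ∫ ω, (∏ i ∈ s, g i) ω ∂ℙ = ∏ i ∈ s, ∫ ω, g i ω ∂ℙ := by
    intro s
    induction s using Finset.induction_on with
    | empty =>
      constructor
      · simp only [Finset.prod_empty]; exact integrable_const (1:ℝ)
      · simp
    | insert a s hj ih =>
      have hind := hfact a s hj
      have hint : Integrable (g a * ∏ i ∈ s, g i) ℙ :=
        hind.integrable_mul (hgint a) ih.1
      constructor
      · rw [Finset.prod_insert hj]; exact hint
      · rw [Finset.prod_insert hj, Finset.prod_insert hj, ← ih.2]
        exact hind.integral_mul_eq_mul_integral (hgint a).aestronglyMeasurable ih.1.aestronglyMeasurable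
  set G : Ω → ℝ := ∏ i ∈ Finset.univ, g i with hG
  have hGint : Integrable G ℙ := (hprod Finset.univ).1
  have hGE : ∫ ω, G ω ∂ℙ ≤ (7/4 : ℝ)^N := by
    rw [(hprod Finset.univ).2]
    calc ∏ i ∈ Finset.univ, ∫ ω, g i ω ∂ℙ ≤ ∏ _i ∈ (Finset.univ : Finset (Fin N)), (7/4 : ℝ) :=
        Finset.prod_le_prod (fun i _ => hgEnn i) (fun i _ => hgE i)
      _ = (7/4 : ℝ)^N := by rw [Finset.prod_const, Finset.card_univ, Fintype.card_fin]
  have hGnonneg : ∀ ω, 0 ≤ G ω := by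
    intro ω
    simp only [hG, Finset.prod_apply]
    exact Finset.prod_nonneg (fun i _ => le_trans zero_le_one (hg1 i ω))
  -- event inclusion
  have hincl : {ω | ε * μ <
      |medianOf (fun j : Fin (2 * k + 1) =>
        (∑ l ∈ Finset.range m, X (j.val * m + l) ω) / m) - μ|}
      ⊆ {ω | (7:ℝ)^(k+1) ≤ G ω} := by
    intro ω hω
    simp only [Set.mem_setOf_eq] at hω ⊢
    have hcount := aux_median_count (fun j : Fin (2*k+1) => W j ω) μ (ε*μ) hω
    set bad : Finset (Fin N) := Finset.univ.filter (fun j => ε*μ < |W j ω - μ|) with hbad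
    have hbadcard : k + 1 ≤ bad.card := hcount
    have h7 : ∀ j ∈ bad, g j ω = 7 := by
      intro j hjb
      have : ω ∈ A j := by
        simp only [hbad, Finset.mem_filter] at hjb
        exact hjb.2
      simp only [hg, Set.indicator_of_mem this]
      norm_num
    calc (7:ℝ)^(k+1) ≤ (7:ℝ)^bad.card := by
          apply pow_le_pow_right₀ (by norm_num) hbadcard
      _ = ∏ j ∈ bad, g j ω := by
          rw [Finset.prod_congr rfl h7, Finset.prod_const]
      _ ≤ ∏ j ∈ Finset.univ, g j ω := by
          rw [← Finset.prod_sdiff (Finset.subset_univ bad)]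
          have h1 : (1:ℝ) ≤ ∏ j ∈ Finset.univ \ bad, g j ω := by
            rw [← Finset.prod_const_one (s := Finset.univ \ bad)]
            exact Finset.prod_le_prod (fun i _ => by norm_num) (fun i _ => hg1 i ω)
          have h2 : (0:ℝ) ≤ ∏ j ∈ bad, g j ω :=
            Finset.prod_nonneg (fun i _ => le_trans zero_le_one (hg1 i ω))
          nlinarith
      _ = G ω := by simp [hG]
  -- Markov
  have hMk := mul_meas_ge_le_integral_of_nonneg
    (Filter.Eventually.of_forall hGnonneg) hGint ((7:ℝ)^(k+1))
  have h7pos : (0:ℝ) < (7:ℝ)^(k+1) := by positivity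
  have hPP : (ℙ {ω | (7:ℝ)^(k+1) ≤ G ω}).toReal ≤ (7/4:ℝ)^N / 7^(k+1) := by
    rw [le_div_iff₀ h7pos]
    calc (ℙ {ω | (7:ℝ)^(k+1) ≤ G ω}).toReal * 7^(k+1)
        = 7^(k+1) * (ℙ {ω | (7:ℝ)^(k+1) ≤ G ω}).toReal := by ring
      _ ≤ ∫ ω, G ω ∂ℙ := hMk
      _ ≤ (7/4:ℝ)^N := hGE
  -- final numeric bound
  have hfinal : (7/4:ℝ)^N / 7^(k+1) ≤ δ := by
    have hδ0 := hδ.1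
    have hδ1 := hδ.2
    have hlog167 : (0:ℝ) < Real.log (16/7) := Real.log_pos (by norm_num)
    have hx : Real.log (1/δ) / Real.log (16/7) ≤ (k:ℝ) := by
      calc Real.log (1/δ) / Real.log (16/7)
          ≤ (⌈Real.log (1/δ) / Real.log (16/7)⌉₊ : ℝ) := Nat.le_ceil _
        _ ≤ (k:ℝ) := by
            rw [hk]
            exact_mod_cast Nat.cast_le.2 (le_max_left _ _)
    have hlogle : Real.log (1/δ) ≤ k * Real.log (16/7) := by
      rw [div_le_iff₀ hlog167] at hx
      linarith
    have h167k : (1:ℝ)/δ ≤ (16/7:ℝ)^k := by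
      have hpow : Real.log ((16/7:ℝ)^k) = k * Real.log (16/7) := by
        rw [Real.log_pow]
      have hlt : Real.log (1/δ) ≤ Real.log ((16/7:ℝ)^k) := by rw [hpow]; exact hlogle
      by_contra hcon
      push_neg at hcon
      exact absurd hlt (not_le.2 (Real.log_lt_log (by positivity) hcon))
    have h716 : ((7:ℝ)/16)^k ≤ δ := by
      have hy : (0:ℝ) < (16/7:ℝ)^k := by positivity
      have h1 : (1:ℝ) ≤ δ * (16/7:ℝ)^k := by
        rw [div_le_iff₀ hδ0] at h167k
        linarith
      have h2 : ((7:ℝ)/16)^k * (16/7:ℝ)^k = (7/16 * (16/7) : ℝ)^k := by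
        rw [← mul_pow]
      have h3 : ((7:ℝ)/16)^k * (16/7:ℝ)^k = 1 := by
        rw [h2]; norm_num
      nlinarith [pow_pos (show (0:ℝ) < 7/16 by norm_num) k]
    have heq : (7/4:ℝ)^N / 7^(k+1) = ((7:ℝ)/16)^k / 4 := by
      have h16 : (16:ℝ)^k = 4^(2*k) := by
        rw [show (16:ℝ) = 4^2 by norm_num]
        exact (pow_mul 4 2 k).symm
      rw [hN, div_pow, div_pow, h16]
      rw [show 2*k+1 = (k+1) + k by ring, pow_add, pow_add]
      rw [show 2*k = k + k by ring, pow_add]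
      field_simp
      ring
    rw [heq]
    have : ((7:ℝ)/16)^k / 4 ≤ ((7:ℝ)/16)^k := by
      have := pow_pos (show (0:ℝ) < 7/16 by norm_num) k
      linarith
    linarith
  calc ℙ {ω | ε * μ <
      |medianOf (fun j : Fin (2 * k + 1) =>
        (∑ l ∈ Finset.range m, X (j.val * m + l) ω) / m) - μ|}
      ≤ ℙ {ω | (7:ℝ)^(k+1) ≤ G ω} := measure_mono hincl
    _ = ENNReal.ofReal ((ℙ {ω | (7:ℝ)^(k+1) ≤ G ω}).toReal) :=
        (ENNReal.ofReal_toReal (measure_ne_top _ _)).symm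
    _ ≤ ENNReal.ofReal δ := ENNReal.ofReal_le_ofReal (le_trans hPP hfinal)
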